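/- Define σ(n) = 4·∑_{k=1}^{n-1} (-1)^k cos((2k-1)π/(4n-2)) + 4. Then σ(n) equals the ℓ¹-distance between the decreasingly sorted eigenvalue sequences of the adjacency matrices of C_{2n} and Z_{2n}, where Z_{2n} has eigenvalues 0 together with 2cos((2k-1)π/(4n-2)) for k = 1, …, 2n−1. -/

import Mathlib

open Real Finset

namespace S18

noncomputable def Fc (n i : ℕ) : ℝ := 2 * Real.cos ((((i+1)/2 : ℕ) : ℝ) * Real.pi / (n : ℝ))

noncomputable def Gz (n i : ℕ) : ℝ :=
  2 * Real.cos (((if i < n then 2*i+1 else 2*i-1 : ℕ) : ℝ) * Real.pi / (4 * (n : ℝ) - 2))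

lemma sum_map_range (N : ℕ) (f : ℕ → ℝ) :
    ((List.range N).map f).sum = ∑ i ∈ Finset.range N, f i := rfl

lemma range_two_mul_map {α : Type*} (N : ℕ) (f : ℕ → α) :
    (List.range (2*N)).map f = (List.range N).flatMap (fun m => [f (2*m), f (2*m+1)]) := by
  induction N with
  | zero => simp
  | succ N ih =>
    have h : 2*(N+1) = (2*N)+1+1 := by ring
    rw [h, List.range_succ, List.range_succ, List.range_succ]
    simp [ih, List.flatMap_append]

lemma bind_pair_perm {α : Type*} (l : List ℕ) (f h : ℕ → α) :
    (l.flatMap fun a => [f a, h a]).Perm (l.map f ++ l.map h) := by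
  induction l with
  | nil => simp
  | cons a l ih =>
    simp only [List.flatMap_cons, List.map_cons, List.cons_append]
    exact ((ih.cons _).cons _).trans (List.perm_middle.symm.cons _)

lemma map_rev_perm {α : Type*} (N : ℕ) (f : ℕ → α) :
    ((List.range N).map (fun k => f (N-1-k))).Perm ((List.range N).map f) := by
  have h : (List.range N).map (fun k => f (N-1-k)) = ((List.range N).map f).reverse := by
    apply List.ext_getElem
    · simp
    · intro i h1 h2
      simp at h1
      simp [List.getElem_reverse, h1]
  rw [h]
  exact List.reverse_perm _


lemma angle_le {a b c d : ℝ} (hb : 0 < b) (hd : 0 < d) (h : a*d ≤ c*b) :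
    a * Real.pi / b ≤ c * Real.pi / d := by
  rw [div_le_div_iff₀ hb hd]
  nlinarith [Real.pi_pos, mul_le_mul_of_nonneg_right h Real.pi_pos.le]

lemma angle_le_pi {x d : ℝ} (hd : 0 < d) (hx : x ≤ d) : x * Real.pi / d ≤ Real.pi := by
  rw [div_le_iff₀ hd]
  nlinarith [Real.pi_pos, mul_le_mul_of_nonneg_right hx Real.pi_pos.le]

lemma cos2_mono {x y : ℝ} (hx : 0 ≤ x) (hy : y ≤ Real.pi) (hxy : x ≤ y) :
    2 * Real.cos y ≤ 2 * Real.cos x := by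
  have := Real.cos_le_cos_of_nonneg_of_le_pi hx hy hxy
  linarith

lemma Fc_sorted (n : ℕ) (hn : 2 ≤ n) :
    ((List.range (2*n)).map (Fc n)).Pairwise (· ≥ ·) := by
  have hn0 : (0:ℝ) < n := by positivity
  have key : ∀ a b : ℕ, a ∈ List.range (2*n) → b ∈ List.range (2*n) → a < b →
      Fc n b ≤ Fc n a := by
    intro a b ha hb hab
    simp only [List.mem_range] at ha hb
    unfold Fc
    apply cos2_mono
    · positivity
    · apply angle_le_pi hn0
      have h1 : (b+1)/2 ≤ n := by omega
      exact_mod_cast Nat.cast_le.mpr h1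
    · apply angle_le hn0 hn0
      have h1 : (a+1)/2 ≤ (b+1)/2 := by omega
      have h2 : ((((a+1)/2 : ℕ)):ℝ) ≤ (((b+1)/2 : ℕ) : ℝ) := by exact_mod_cast h1
      nlinarith
  show List.Pairwise _ _
  exact List.pairwise_lt_range.imp_of_mem
    (fun {a b} ha hb h => by exact (key a b ha hb h : _ ≥ _)) |>.map (Fc n) (fun a b h => h)

lemma Gz_sorted (n : ℕ) (hn : 2 ≤ n) :
    ((List.range (2*n)).map (Gz n)).Pairwise (· ≥ ·) := by
  have hd0 : (0:ℝ) < 4*(n:ℝ)-2 := by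
    have : (2:ℝ) ≤ n := by exact_mod_cast hn
    linarith
  have key : ∀ a b : ℕ, a ∈ List.range (2*n) → b ∈ List.range (2*n) → a < b →
      Gz n b ≤ Gz n a := by
    intro a b ha hb hab
    simp only [List.mem_range] at ha hb
    unfold Gz
    set ea : ℕ := if a < n then 2*a+1 else 2*a-1 with hea
    set eb : ℕ := if b < n then 2*b+1 else 2*b-1 with heb
    have h1 : ea ≤ eb := by
      rw [hea, heb]; split_ifs <;> omega
    have h2 : eb ≤ 4*n-2 := by
      rw [heb]; split_ifs <;> omega
    have h2' : (eb:ℝ) ≤ 4*(n:ℝ)-2 := by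
      have : (eb:ℝ) ≤ ((4*n-2 : ℕ):ℝ) := by exact_mod_cast h2
      have hc : ((4*n-2 : ℕ):ℝ) = 4*(n:ℝ)-2 := by
        have : 2 ≤ 4*n := by omega
        push_cast [Nat.cast_sub this]
        ring
      rw [hc] at this; exact this
    apply cos2_mono
    · positivity
    · exact angle_le_pi hd0 h2'
    · apply angle_le hd0 hd0
      have : (ea:ℝ) ≤ (eb:ℝ) := by exact_mod_cast h1
      nlinarith
  show List.Pairwise _ _
  exact List.pairwise_lt_range.imp_of_mem
    (fun {a b} ha hb h => by exact (key a b ha hb h : _ ≥ _)) |>.map (Gz n) (fun a b h => h)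


lemma perm_c (n : ℕ) (hn : 2 ≤ n) :
    ((List.range (2*n)).map
      (fun k => 2 * Real.cos (2 * ((k : ℝ) + 1) * Real.pi / (2 * (n : ℝ))))).Perm
    ((List.range (2*n)).map (Fc n)) := by
  have hn0 : (n:ℝ) ≠ 0 := by
    have : (2:ℝ) ≤ n := by exact_mod_cast hn
    linarith
  have hdo : ∀ (N : ℕ) (g : ℝ → ℝ), (List.map g (do let a ← List.range N; pure ((a:ℝ)))) =
      (List.range N).map (fun a : ℕ => g (a:ℝ)) := by
    intro N g
    induction (List.range N) with
    | nil => rfl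
    | cons a l ih => simp_all
  rw [hdo]
  set u : ℕ → ℝ := fun j => 2 * Real.cos ((j:ℝ) * Real.pi / (n:ℝ)) with hu
  have hL : (List.range (2*n)).map
      (fun a : ℕ => 2 * Real.cos (2 * ((a : ℝ) + 1) * Real.pi / (2 * (n : ℝ)))) =
      (List.range (2*n)).map (fun k => u (k+1)) := by
    apply List.map_congr_left
    intro k _
    show _ = 2 * Real.cos ((((k+1:ℕ)):ℝ) * Real.pi / (n:ℝ))
    have h2 : (2:ℝ) * ((k:ℝ) + 1) * Real.pi / (2 * (n:ℝ)) = (((k+1:ℕ)):ℝ) * Real.pi / (n:ℝ) := by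
      push_cast
      field_simp
    rw [h2]
  rw [hL]
  have p1 : ((List.range (2*n)).map (fun k => u (k+1))).Perm
      ((List.range n).map (fun k => u (k+1)) ++ (List.range n).map u) := by
    have hsplit : (List.range (2*n)).map (fun k => u (k+1)) =
        (List.range n).map (fun k => u (k+1)) ++ (List.range n).map (fun k => u (n+k+1)) := by
      rw [show 2*n = n+n from by ring, List.range_add, List.map_append, List.map_map]
      simp [Function.comp]
    rw [hsplit]
    refine List.Perm.append (List.Perm.refl _) ?_
    have hcg : (List.range n).map (fun k => u (n+k+1)) =
        (List.range n).map (fun k => u (n-1-k)) := by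
      apply List.map_congr_left
      intro k hk
      rw [List.mem_range] at hk
      set m := n - 1 - k with hm
      have hnat : (n+k+1) + m = 2*n := by omega
      have hcast : ((n+k+1:ℕ):ℝ) = 2*(n:ℝ) - (m:ℝ) := by
        have h := congrArg (fun t : ℕ => (t:ℝ)) hnat
        push_cast at h ⊢
        linarith
      show 2 * Real.cos (((n+k+1:ℕ):ℝ) * Real.pi / (n:ℝ)) =
        2 * Real.cos ((m:ℝ) * Real.pi / (n:ℝ))
      rw [hcast]
      have : (2*(n:ℝ) - (m:ℝ)) * Real.pi / (n:ℝ) = 2*Real.pi - (m:ℝ)*Real.pi/(n:ℝ) := by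
        field_simp
      rw [this, Real.cos_two_pi_sub]
    rw [hcg]
    exact map_rev_perm n u
  have e1 : ∀ m:ℕ, Fc n (2*m) = u m := by
    intro m
    unfold Fc
    simp only [hu]
    have h : (2*m+1)/2 = m := by omega
    rw [h]
  have e2 : ∀ m:ℕ, Fc n (2*m+1) = u (m+1) := by
    intro m
    unfold Fc
    simp only [hu]
    have h : (2*m+1+1)/2 = m+1 := by omega
    rw [h]
  have p2 : ((List.range (2*n)).map (Fc n)).Perm
      ((List.range n).map u ++ (List.range n).map (fun k => u (k+1))) := by
    rw [range_two_mul_map]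
    have : ((List.range n).flatMap (fun m => [Fc n (2*m), Fc n (2*m+1)])) =
        ((List.range n).flatMap (fun m => [u m, u (m+1)])) := by
      simp only [e1, e2]
    rw [this]
    exact bind_pair_perm _ _ _
  exact p1.trans (List.perm_append_comm.trans p2.symm)

lemma perm_z (n : ℕ) (hn : 2 ≤ n) :
    (((0:ℝ) :: (List.range (2*n-1)).map
      (fun k => 2 * Real.cos ((2 * ((k : ℝ) + 1) - 1) * Real.pi / (4 * (n : ℝ) - 2)))).Perm
    ((List.range (2*n)).map (Gz n))) := by
  have hdo : ∀ (N : ℕ) (g : ℝ → ℝ), (List.map g (do let a ← List.range N; pure ((a:ℝ)))) =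
      (List.range N).map (fun a : ℕ => g (a:ℝ)) := by
    intro N g
    induction (List.range N) with
    | nil => rfl
    | cons a l ih => simp_all
  rw [hdo]
  set w : ℕ → ℝ := fun j => 2 * Real.cos (((2*j+1:ℕ):ℝ) * Real.pi / (4*(n:ℝ)-2)) with hw
  have hL : (List.range (2*n-1)).map
      (fun a : ℕ => 2 * Real.cos ((2 * ((a : ℝ) + 1) - 1) * Real.pi / (4 * (n : ℝ) - 2))) =
      (List.range (2*n-1)).map w := by
    apply List.map_congr_left
    intro k _
    simp only [hw]
    congr 2
    push_cast
    ring
  rw [hL]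
  have hsplitL : (List.range (2*n-1)).map w =
      (List.range n).map w ++ (List.range (n-1)).map (fun k => w (n+k)) := by
    rw [show 2*n-1 = n+(n-1) from by omega, List.range_add, List.map_append, List.map_map]
    simp [Function.comp]
  have hR : (List.range (2*n)).map (Gz n) =
      (List.range n).map w ++ (0:ℝ) :: (List.range (n-1)).map (fun k => w (n+k)) := by
    rw [show 2*n = (n+1)+(n-1) from by omega, List.range_add, List.map_append, List.map_map,
      List.range_succ, List.map_append]
    have hGn : Gz n n = 0 := by
      unfold Gz
      rw [if_neg (lt_irrefl n)]
      have hc : ((2*n-1:ℕ):ℝ) = 2*(n:ℝ)-1 := by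
        have h1 : 1 ≤ 2*n := by omega
        push_cast [Nat.cast_sub h1]
        ring
      have : ((2*n-1:ℕ):ℝ) * Real.pi / (4*(n:ℝ)-2) = Real.pi/2 := by
        rw [hc]
        have h2 : 4*(n:ℝ)-2 ≠ 0 := by
          have : (2:ℝ) ≤ n := by exact_mod_cast hn
          linarith
        rw [div_eq_div_iff h2 two_ne_zero]
        ring
      rw [this, Real.cos_pi_div_two]
      norm_num
    have hGi : (List.range n).map (Gz n) = (List.range n).map w := by
      apply List.map_congr_left
      intro i hi
      rw [List.mem_range] at hi
      unfold Gz
      rw [if_pos hi]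
    have hGtail : (List.range (n-1)).map ((Gz n) ∘ (fun x => n+1+x)) =
        (List.range (n-1)).map (fun k => w (n+k)) := by
      apply List.map_congr_left
      intro k hk
      rw [List.mem_range] at hk
      simp only [Function.comp]
      unfold Gz
      rw [if_neg (by omega)]
      simp only [hw]
      have he : 2*(n+1+k)-1 = 2*(n+k)+1 := by omega
      rw [he]
    rw [hGi, hGtail]
    simp [hGn]
  rw [hsplitL, hR]
  exact List.perm_middle.symm


lemma alt_sum (n m : ℕ) : ∑ i ∈ Finset.range (2*m+1), (-1:ℝ)^i * Fc n i = 2 := by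
  induction m with
  | zero =>
    simp only [Nat.mul_zero, Nat.zero_add, Finset.sum_range_one, pow_zero, one_mul]
    unfold Fc
    norm_num
  | succ m ih =>
    have h : 2*(m+1)+1 = (2*m+1)+1+1 := by ring
    rw [h, Finset.sum_range_succ, Finset.sum_range_succ, ih]
    have he : Fc n (2*m+1) = Fc n (2*m+1+1) := by
      unfold Fc
      have h2 : (2*m+1+1)/2 = (2*m+1+1+1)/2 := by omega
      rw [h2]
    have hodd : (-1:ℝ)^(2*m+1) = -1 := Odd.neg_one_pow ⟨m, by ring⟩
    have heven : (-1:ℝ)^(2*m+1+1) = 1 := Even.neg_one_pow ⟨m+1, by ring⟩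
    rw [hodd, heven, ← he]
    ring

lemma F_alt (n : ℕ) (hn : 2 ≤ n) : ∑ i ∈ Finset.range n, (-1:ℝ)^i * Fc n i = 2 := by
  have hn0 : (n:ℝ) ≠ 0 := by
    have : (2:ℝ) ≤ n := by exact_mod_cast hn
    linarith
  rcases Nat.even_or_odd n with he | ho
  · obtain ⟨m, hm⟩ := he
    have hm1 : 1 ≤ m := by omega
    have hr : Finset.range n = Finset.range ((2*(m-1)+1)+1) := by
      congr 1
      omega
    rw [hr, Finset.sum_range_succ, alt_sum]
    have hF : Fc n (2*(m-1)+1) = 0 := by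
      unfold Fc
      have h2 : (2*(m-1)+1+1)/2 = m := by omega
      rw [h2]
      have h3 : (m:ℝ)*Real.pi/(n:ℝ) = Real.pi/2 := by
        have hnm : (n:ℝ) = 2*(m:ℝ) := by
          have : n = 2*m := by omega
          exact_mod_cast this
        have hm0 : (m:ℝ) ≠ 0 := by
          have : (1:ℝ) ≤ m := by exact_mod_cast hm1
          linarith
        rw [hnm]
        field_simp
      rw [h3, Real.cos_pi_div_two]
      ring
    rw [hF]
    ring
  · obtain ⟨m, hm⟩ := ho
    have hr : Finset.range n = Finset.range (2*m+1) := by rw [hm]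
    rw [hr, alt_sum]

lemma sum_eval (n : ℕ) (hn : 2 ≤ n) :
    ∑ i ∈ Finset.range (2*n), |Fc n i - Gz n i| =
      4 * ∑ k ∈ Finset.Icc 1 (n - 1),
        (-1 : ℝ) ^ k * Real.cos ((2 * (k : ℝ) - 1) * Real.pi / (4 * (n : ℝ) - 2)) + 4 := by
  have hnR : (2:ℝ) ≤ n := by exact_mod_cast hn
  have hn0 : (n:ℝ) ≠ 0 := by linarith
  have hd0 : (0:ℝ) < 4*(n:ℝ)-2 := by linarith
  set q : ℕ → ℝ := fun i => |Fc n i - Gz n i| with hq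
  -- reflection symmetry
  have hrefl : ∀ a b : ℕ, a + b + 1 = 2*n → a < n → q b = q a := by
    intro a b hab ha
    have hFb : Fc n b = -Fc n a := by
      unfold Fc
      have h1 : (b+1)/2 = n - (a+1)/2 := by omega
      have h2 : (a+1)/2 ≤ n := by omega
      rw [h1, Nat.cast_sub h2]
      have h3 : (((n:ℝ)) - (((a+1)/2:ℕ):ℝ)) * Real.pi / (n:ℝ)
          = Real.pi - (((a+1)/2:ℕ):ℝ)*Real.pi/(n:ℝ) := by
        field_simp
      rw [h3, Real.cos_pi_sub]
      ring
    have hGb : Gz n b = -Gz n a := by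
      unfold Gz
      rw [if_neg (by omega : ¬ b < n), if_pos ha]
      have h1 : 2*b-1 = (4*n-2) - (2*a+1) := by omega
      have h2 : 2*a+1 ≤ 4*n-2 := by omega
      rw [h1, Nat.cast_sub h2]
      have hc : ((4*n-2:ℕ):ℝ) = 4*(n:ℝ)-2 := by
        have h4 : 2 ≤ 4*n := by omega
        push_cast [Nat.cast_sub h4]
        ring
      rw [hc]
      have h3 : ((4*(n:ℝ)-2) - ((2*a+1:ℕ):ℝ)) * Real.pi / (4*(n:ℝ)-2)
          = Real.pi - ((2*a+1:ℕ):ℝ)*Real.pi/(4*(n:ℝ)-2) := by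
        field_simp
      rw [h3, Real.cos_pi_sub]
      ring
    simp only [hq]
    rw [hFb, hGb, show -Fc n a - -Gz n a = -(Fc n a - Gz n a) from by ring, abs_neg]
  -- split the sum in two halves
  have hsplit : ∑ i ∈ Finset.range (2*n), q i
      = ∑ i ∈ Finset.range n, q i + ∑ i ∈ Finset.range n, q (n+i) := by
    rw [show 2*n = n+n from by ring, Finset.sum_range_add]
  have hswap : ∑ i ∈ Finset.range n, q (n+i) = ∑ i ∈ Finset.range n, q i := by
    have h1 : ∀ i ∈ Finset.range n, q (n+i) = q (n-1-i) := by
      intro i hi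
      rw [Finset.mem_range] at hi
      exact hrefl (n-1-i) (n+i) (by omega) (by omega)
    rw [Finset.sum_congr rfl h1, Finset.sum_range_reflect]
  -- pointwise evaluation on the first half
  have hpoint : ∀ i ∈ Finset.range n, q i =
      (-1:ℝ)^i * (Fc n i - 2*Real.cos (((2*i+1:ℕ):ℝ)*Real.pi/(4*(n:ℝ)-2))) := by
    intro i hi
    rw [Finset.mem_range] at hi
    have hGi : Gz n i = 2*Real.cos (((2*i+1:ℕ):ℝ)*Real.pi/(4*(n:ℝ)-2)) := by
      unfold Gz
      rw [if_pos hi]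
    have hy : ((2*i+1:ℕ):ℝ)*Real.pi/(4*(n:ℝ)-2) ≤ Real.pi := by
      apply angle_le_pi hd0
      have h6 : (2*i+1:ℕ) ≤ 4*n-2 := by omega
      have h7 : ((2*i+1:ℕ):ℝ) ≤ ((4*n-2:ℕ):ℝ) := by exact_mod_cast h6
      have hc : ((4*n-2:ℕ):ℝ) = 4*(n:ℝ)-2 := by
        have h4 : 2 ≤ 4*n := by omega
        push_cast [Nat.cast_sub h4]
        ring
      rw [hc] at h7
      exact h7
    have hcast2 : ((2*i+1:ℕ):ℝ) = 2*(i:ℝ)+1 := by push_cast; ring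
    rcases Nat.even_or_odd i with he | ho
    · have hpow : (-1:ℝ)^i = 1 := he.neg_one_pow
      obtain ⟨m, hm⟩ := he
      have hm2 : (i+1)/2 = m := by omega
      have hmR : (i:ℝ) = 2*(m:ℝ) := by
        have : i = 2*m := by omega
        exact_mod_cast this
      have hFG : 2*Real.cos (((2*i+1:ℕ):ℝ)*Real.pi/(4*(n:ℝ)-2)) ≤ Fc n i := by
        unfold Fc
        rw [hm2]
        apply cos2_mono
        · positivity
        · exact hy
        · apply angle_le (by linarith) hd0
          rw [hcast2, hmR]
          have hm0 : (0:ℝ) ≤ (m:ℝ) := Nat.cast_nonneg m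
          nlinarith
      simp only [hq, hGi, hpow, one_mul]
      rw [abs_of_nonneg (by linarith)]
    · have hpow : (-1:ℝ)^i = -1 := ho.neg_one_pow
      obtain ⟨m, hm⟩ := ho
      have hm2 : (i+1)/2 = m+1 := by omega
      have hmR : (i:ℝ) = 2*(m:ℝ)+1 := by
        rw [hm]
        push_cast
        ring
      have hFG : Fc n i ≤ 2*Real.cos (((2*i+1:ℕ):ℝ)*Real.pi/(4*(n:ℝ)-2)) := by
        unfold Fc
        rw [hm2]
        apply cos2_mono
        · positivity
        · apply angle_le_pi (by linarith : (0:ℝ) < (n:ℝ))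
          have h8 : m+1 ≤ n := by omega
          have h9 : ((m+1:ℕ):ℝ) ≤ (n:ℝ) := by exact_mod_cast h8
          push_cast at h9 ⊢
          linarith
        · apply angle_le hd0 (by linarith)
          rw [hcast2, hmR]
          have h8 : 2*m+2 ≤ n := by omega
          have h9 : 2*(m:ℝ)+2 ≤ (n:ℝ) := by exact_mod_cast h8
          have hm0 : (0:ℝ) ≤ (m:ℝ) := Nat.cast_nonneg m
          push_cast
          nlinarith
      simp only [hq, hGi, hpow]
      rw [abs_of_nonpos (by linarith)]
      ring
  -- evaluate the half sum
  have hhalf : ∑ i ∈ Finset.range n, q i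
      = 2 - ∑ i ∈ Finset.range n,
          (-1:ℝ)^i * (2*Real.cos (((2*i+1:ℕ):ℝ)*Real.pi/(4*(n:ℝ)-2))) := by
    rw [Finset.sum_congr rfl hpoint]
    simp only [mul_sub]
    rw [Finset.sum_sub_distrib, F_alt n hn]
  -- drop the vanishing last term
  have hlastzero : Real.cos (((2*(n-1)+1:ℕ):ℝ)*Real.pi/(4*(n:ℝ)-2)) = 0 := by
    have h1 : (2*(n-1)+1:ℕ) = 2*n-1 := by omega
    have hc : ((2*n-1:ℕ):ℝ) = 2*(n:ℝ)-1 := by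
      have h4 : 1 ≤ 2*n := by omega
      push_cast [Nat.cast_sub h4]
      ring
    rw [h1, hc]
    have h3 : (2*(n:ℝ)-1)*Real.pi/(4*(n:ℝ)-2) = Real.pi/2 := by
      rw [div_eq_div_iff hd0.ne' two_ne_zero]
      ring
    rw [h3, Real.cos_pi_div_two]
  have hdrop : ∑ i ∈ Finset.range n,
        (-1:ℝ)^i * (2*Real.cos (((2*i+1:ℕ):ℝ)*Real.pi/(4*(n:ℝ)-2)))
      = 2 * ∑ i ∈ Finset.range (n-1),
          (-1:ℝ)^i * Real.cos (((2*i+1:ℕ):ℝ)*Real.pi/(4*(n:ℝ)-2)) := by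
    have hr : Finset.range n = Finset.range ((n-1)+1) := by
      congr 1
      omega
    rw [hr, Finset.sum_range_succ, hlastzero, Finset.mul_sum]
    rw [show ((-1:ℝ)^(n-1) * (2*0)) = 0 from by ring, add_zero]
    apply Finset.sum_congr rfl
    intro i _
    ring
  -- rewrite the RHS sum
  have hIcc : ∑ k ∈ Finset.Icc 1 (n-1),
        (-1:ℝ)^k * Real.cos ((2*(k:ℝ)-1)*Real.pi/(4*(n:ℝ)-2))
      = - ∑ i ∈ Finset.range (n-1),
          (-1:ℝ)^i * Real.cos (((2*i+1:ℕ):ℝ)*Real.pi/(4*(n:ℝ)-2)) := by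
    rw [← Finset.Ico_add_one_right_eq_Icc, show n-1+1 = n from by omega, Finset.sum_Ico_eq_sum_range,
      show n - 1 = n-1 from rfl, ← Finset.sum_neg_distrib]
    apply Finset.sum_congr rfl
    intro i _
    have hangle : 2*((1+i:ℕ):ℝ)-1 = ((2*i+1:ℕ):ℝ) := by push_cast; ring
    rw [hangle, pow_add, pow_one]
    ring
  calc ∑ i ∈ Finset.range (2*n), |Fc n i - Gz n i| = ∑ i ∈ Finset.range (2*n), q i := rfl
    _ = _ := by rw [hsplit, hswap, hhalf, hdrop, hIcc]; ring

end S18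


theorem stmt18 (n : ℕ) (hn : 2 ≤ n) (c z : List ℝ)
    (hc : c.Perm ((List.range (2 * n)).map
      (fun k => 2 * Real.cos (2 * ((k : ℝ) + 1) * Real.pi / (2 * (n : ℝ))))))
    (hz : z.Perm ((0 : ℝ) :: (List.range (2 * n - 1)).map
      (fun k => 2 * Real.cos ((2 * ((k : ℝ) + 1) - 1) * Real.pi / (4 * (n : ℝ) - 2)))))
    (hcs : c.Pairwise (· ≥ ·)) (hzs : z.Pairwise (· ≥ ·)) :
    (List.zipWith (fun a b => |a - b|) c z).sum =
      4 * ∑ k ∈ Finset.Icc 1 (n - 1),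
        (-1 : ℝ) ^ k * Real.cos ((2 * (k : ℝ) - 1) * Real.pi / (4 * (n : ℝ) - 2)) + 4 := by
  haveI : Std.Antisymm (· ≥ · : ℝ → ℝ → Prop) := ⟨fun a b h1 h2 => le_antisymm h2 h1⟩
  have hc2 : c = (List.range (2*n)).map (S18.Fc n) :=
    List.Perm.eq_of_pairwise' hcs (S18.Fc_sorted n hn) (hc.trans (S18.perm_c n hn))
  have hz2 : z = (List.range (2*n)).map (S18.Gz n) :=
    List.Perm.eq_of_pairwise' hzs (S18.Gz_sorted n hn) (hz.trans (S18.perm_z n hn))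
  rw [hc2, hz2, List.zipWith_map, List.zipWith_self]
  calc ((List.range (2*n)).map (fun i => |S18.Fc n i - S18.Gz n i|)).sum
      = ∑ i ∈ Finset.range (2*n), |S18.Fc n i - S18.Gz n i| := S18.sum_map_range _ _
    _ = _ := S18.sum_eval n hn
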